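/- Let V be a 5-dimensional real vector space with symmetric bilinear form g of signature (-,+,+,+,+), and T a g-self-adjoint operator. Suppose T has a 4-dimensional T-invariant subspace N on which g is positive semidefinite with 1-dimensional radical (a null 4-subspace). Then the radical of g|_N is spanned by a null eigenvector of T. -/
import Mathlib


open Module

theorem stmt_17 {V : Type*} [AddCommGroup V] [Module ℝ V] [FiniteDimensional ℝ V]
    (hdim : finrank ℝ V = 5)
    (g : LinearMap.BilinForm ℝ V)
    (hsymm : ∀ u v : V, g u v = g v u)
    (hsig : ∃ b : Basis (Fin 5) ℝ V, ∀ i j, g (b i) (b j) =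
      if i = j then (if i = 0 then -1 else 1) else 0)
    (T : V →ₗ[ℝ] V)
    (hsa : ∀ u v : V, g (T u) v = g u (T v))
    (N : Submodule ℝ V) (hN4 : finrank ℝ N = 4)
    (hinv : ∀ v ∈ N, T v ∈ N)
    (hpsd : ∀ v ∈ N, 0 ≤ g v v)
    (hrad : ∃ r : V, r ∈ N ∧ r ≠ 0 ∧ (∀ w ∈ N, g r w = 0) ∧
      ∀ u ∈ N, (∀ w ∈ N, g u w = 0) → ∃ c : ℝ, u = c • r) :
    ∃ v : V, v ∈ N ∧ v ≠ 0 ∧ g v v = 0 ∧ (∀ w ∈ N, g v w = 0) ∧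
      (∃ lam : ℝ, T v = lam • v) ∧
      ∀ u ∈ N, (∀ w ∈ N, g u w = 0) → ∃ c : ℝ, u = c • v := by
  obtain ⟨r, hrN, hr0, hrw, hspan⟩ := hrad
  refine ⟨r, hrN, hr0, hrw r hrN, hrw, ?_, hspan⟩
  obtain ⟨c, hc⟩ := hspan (T r) (hinv r hrN) (fun w hw => by
    rw [hsa]; exact hrw (T w) (hinv w hw))
  exact ⟨c, hc⟩
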